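/- Let G be a finite multigraph and O a fixed orientation of G. Then the number of distinct score vectors of orientations of G equals the number of distinct score vectors of spanning subdigraphs of the directed graph G_O. -/

import Mathlib

open Finset

variable {V E : Type*}

/-- Number of connected components of the multigraph on vertex set `V`
with edges `A ⊆ E`, where `ends e` gives the (unordered) endpoints of `e`. -/
noncomputable def numComponents (ends : E → Sym2 V) (A : Finset E) : ℕ :=
  Nat.card (SimpleGraph.fromRel fun x y => ∃ e ∈ A, ends e = s(x, y)).ConnectedComponent

/-- The spanning subgraph `(V, A)` of the multigraph is a forest:
no loops, no parallel edges, and the underlying simple graph is acyclic. -/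
def IsForestEdges (ends : E → Sym2 V) (A : Finset E) : Prop :=
  (∀ e ∈ A, ¬ (ends e).IsDiag) ∧ Set.InjOn ends ↑A ∧
    (SimpleGraph.fromRel fun x y => ∃ e ∈ A, ends e = s(x, y)).IsAcyclic

/-- Subset-expansion evaluation of the Tutte polynomial of the multigraph. -/
noncomputable def tutteEval [Fintype V] [Fintype E] [DecidableEq E]
    (ends : E → Sym2 V) (x y : ℤ) : ℤ :=
  ∑ A : Finset E,
    (x - 1) ^ (numComponents ends A - numComponents ends Finset.univ) *
      (y - 1) ^ (numComponents ends A + A.card - Fintype.card V)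

/-- Tail of edge `e` under the orientation `σ` (edges carry a reference
direction `src e → tgt e`; `σ e = true` means the edge is flipped). -/
def otail (src tgt : E → V) (σ : E → Bool) (e : E) : V :=
  if σ e then tgt e else src e

/-- Head of edge `e` under the orientation `σ`. -/
def ohead (src tgt : E → V) (σ : E → Bool) (e : E) : V :=
  if σ e then src e else tgt e

/-- Outdegree of `v` under the orientation `σ`. -/
def outdeg [Fintype E] [DecidableEq V] (src tgt : E → V) (σ : E → Bool) (v : V) : ℕ :=
  (Finset.univ.filter fun e => otail src tgt σ e = v).card

/-- Indegree of `v` under the orientation `σ`. -/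
def indeg [Fintype E] [DecidableEq V] (src tgt : E → V) (σ : E → Bool) (v : V) : ℕ :=
  (Finset.univ.filter fun e => ohead src tgt σ e = v).card

/-- Score of `v` under the orientation `σ`: outdegree minus indegree. -/
def score [Fintype E] [DecidableEq V] (src tgt : E → V) (σ : E → Bool) (v : V) : ℤ :=
  (outdeg src tgt σ v : ℤ) - (indeg src tgt σ v : ℤ)

/-- Score of `v` in the spanning subdigraph of `G_σ` with arc set `F`. -/
def scoreSub [DecidableEq V] (src tgt : E → V) (σ : E → Bool) (F : Finset E) (v : V) : ℤ :=
  ((F.filter fun e => otail src tgt σ e = v).card : ℤ) -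
    ((F.filter fun e => ohead src tgt σ e = v).card : ℤ)

/-- Degree of `v` in the spanning subgraph with edge set `F` (loops count twice). -/
def degIn [DecidableEq V] (src tgt : E → V) (F : Finset E) (v : V) : ℕ :=
  (F.filter fun e => src e = v).card + (F.filter fun e => tgt e = v).card

/-- Directed reachability in the digraph `G_σ`. -/
def dirReach (src tgt : E → V) (σ : E → Bool) : V → V → Prop :=
  Relation.ReflTransGen fun x y => ∃ e, otail src tgt σ e = x ∧ ohead src tgt σ e = y

/-- For a fixed orientation `σ0` of `G`, the number of distinct score vectors
of orientations of `G` equals the number of distinct score vectors of spanning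
subdigraphs of `G_{σ0}`. -/
lemma score_eq_sum [Fintype E] [DecidableEq V] (src tgt : E → V) (σ : E → Bool) (v : V) :
    score src tgt σ v =
      ∑ e : E, ((if otail src tgt σ e = v then (1 : ℤ) else 0) -
        (if ohead src tgt σ e = v then (1 : ℤ) else 0)) := by
  rw [Finset.sum_sub_distrib]
  simp only [score, outdeg, indeg, Finset.card_filter]
  push_cast
  simp

lemma scoreSub_eq_sum [Fintype E] [DecidableEq V] [DecidableEq E] (src tgt : E → V) (σ : E → Bool)
    (F : Finset E) (v : V) :
    scoreSub src tgt σ F v =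
      ∑ e : E, (if e ∈ F then ((if otail src tgt σ e = v then (1 : ℤ) else 0) -
        (if ohead src tgt σ e = v then (1 : ℤ) else 0)) else 0) := by
  classical
  rw [Finset.sum_ite_mem, Finset.univ_inter, Finset.sum_sub_distrib]
  simp only [scoreSub, Finset.card_filter]
  push_cast
  simp

lemma key_score [Fintype E] [DecidableEq V] (src tgt : E → V) (σ0 σ : E → Bool) (v : V) :
    score src tgt σ v = score src tgt σ0 v -
      2 * scoreSub src tgt σ0 (Finset.univ.filter fun e => σ e ≠ σ0 e) v := by
  classical
  rw [score_eq_sum, score_eq_sum, scoreSub_eq_sum, Finset.mul_sum, ← Finset.sum_sub_distrib]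
  refine Finset.sum_congr rfl fun e _ => ?_
  simp only [Finset.mem_filter, Finset.mem_univ, true_and]
  by_cases h : σ e = σ0 e
  · simp [otail, ohead, h]
    congr
  · simp only [h, if_pos, ne_eq, not_false_eq_true, if_true]
    have h1 : otail src tgt σ e = ohead src tgt σ0 e := by
      cases hb : σ e <;> cases hb0 : σ0 e <;> simp_all [otail, ohead]
    have h2 : ohead src tgt σ e = otail src tgt σ0 e := by
      cases hb : σ e <;> cases hb0 : σ0 e <;> simp_all [otail, ohead]
    rw [h1, h2]; ring

theorem stmt_10 [Fintype E] [DecidableEq V] (src tgt : E → V) (σ0 : E → Bool) :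
    Nat.card (Set.range fun σ : E → Bool => score src tgt σ) =
      Nat.card (Set.range fun F : Finset E => scoreSub src tgt σ0 F) := by
  classical
  set T : (V → ℤ) → (V → ℤ) := fun s v => score src tgt σ0 v - 2 * s v with hT
  have hTinj : Function.Injective T := by
    intro s s' h
    funext v
    have := congrFun h v
    simp only [hT] at this
    omega
  have hrange : (Set.range fun σ : E → Bool => score src tgt σ) =
      T '' (Set.range fun F : Finset E => scoreSub src tgt σ0 F) := by
    ext s
    constructor
    · rintro ⟨σ, rfl⟩
      exact ⟨scoreSub src tgt σ0 (Finset.univ.filter fun e => σ e ≠ σ0 e),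
        ⟨_, rfl⟩, by funext v; exact (key_score src tgt σ0 σ v).symm⟩
    · rintro ⟨_, ⟨F, rfl⟩, rfl⟩
      refine ⟨fun e => if e ∈ F then !σ0 e else σ0 e, ?_⟩
      have hF : (Finset.univ.filter fun e =>
          (if e ∈ F then !σ0 e else σ0 e) ≠ σ0 e) = F := by
        ext e
        by_cases h : e ∈ F <;> simp [h]
      funext v
      show score src tgt _ v = T (scoreSub src tgt σ0 F) v
      rw [key_score src tgt σ0 _ v, hF]
  rw [hrange, Nat.card_image_of_injective hTinj]
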